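/- Let N ≥ 2, 2 ≤ p < N, x_0 ∈ ℝ^N, and for ε > 0 let f_ε(x) = C_0^{p−1} C_1^{p²/(N−p)} ε^p (ε^p + |x − x_0|^{p/(p−1)})^{−(N − (N−p)/p)}, where C_0 = ((p−1)/(N−p))(N ω_N)^{−1/(p−1)} and C_1 = N^{(N−p)/p²} ((N−p)/(p−1))^{((p−1)(N−p))/p²}. Then f_ε ≥ 0, for every r > 0 one has lim_{ε → 0⁺} ∫_{B_r(x_0)} f_ε dx = 1, and for every r > 0 one has sup_{|x − x_0| ≥ r} f_ε(x) → 0 as ε → 0⁺; that is, f_ε converges weakly to the Dirac mass δ_{x_0} as ε → 0. -/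

import Mathlib

open MeasureTheory Real Filter
open scoped Topology

noncomputable section

/-- The family `f_ε = −Δ_p Γ_ε` of regularized sources is nonnegative, its integral over any
fixed ball around `x₀` tends to `1`, and it tends to `0` uniformly away from `x₀`, as
`ε → 0⁺`; that is, `f_ε ⇀ δ_{x₀}`. -/
theorem regularized_source_weak_dirac (N : ℕ) (hN : 2 ≤ N) (p : ℝ)
    (hp2 : 2 ≤ p) (hpN : p < N) (x0 : EuclideanSpace ℝ (Fin N)) :
    let ωN : ℝ := (volume (Metric.ball (0 : EuclideanSpace ℝ (Fin N)) 1)).toReal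
    let C0 : ℝ := ((p - 1) / ((N : ℝ) - p)) * ((N : ℝ) * ωN) ^ (-(1 : ℝ) / (p - 1))
    let C1 : ℝ := (N : ℝ) ^ (((N : ℝ) - p) / p ^ 2) *
      (((N : ℝ) - p) / (p - 1)) ^ ((p - 1) * ((N : ℝ) - p) / p ^ 2)
    let fε : ℝ → EuclideanSpace ℝ (Fin N) → ℝ :=
      fun ε x => C0 ^ (p - 1) * C1 ^ (p ^ 2 / ((N : ℝ) - p)) * ε ^ p *
        (ε ^ p + ‖x - x0‖ ^ (p / (p - 1))) ^ (-((N : ℝ) - ((N : ℝ) - p) / p))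
    (∀ ε : ℝ, 0 < ε → ∀ x : EuclideanSpace ℝ (Fin N), 0 ≤ fε ε x) ∧
    (∀ r : ℝ, 0 < r →
      Filter.Tendsto (fun ε => ∫ x in Metric.ball x0 r, fε ε x)
        (nhdsWithin 0 (Set.Ioi 0)) (nhds 1)) ∧
    ∀ r : ℝ, 0 < r →
      TendstoUniformlyOn (fun ε x => fε ε x) (fun _ => (0 : ℝ))
        (nhdsWithin 0 (Set.Ioi 0)) {x : EuclideanSpace ℝ (Fin N) | r ≤ ‖x - x0‖} := by
  intro ωN C0 C1 fε
  have hωNdef : ωN = (volume (Metric.ball (0 : EuclideanSpace ℝ (Fin N)) 1)).toReal := rfl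
  have hN2 : (2:ℝ) ≤ (N:ℝ) := by exact_mod_cast hN
  have hNpos : (0:ℝ) < (N:ℝ) := by linarith
  have hp0 : (0:ℝ) < p := by linarith
  have hp1 : (0:ℝ) < p - 1 := by linarith
  have hNp : (0:ℝ) < (N:ℝ) - p := by linarith
  set q : ℝ := p / (p - 1) with hqdef
  have hq0 : 0 < q := div_pos hp0 hp1
  have hq1 : 1 ≤ q := by
    rw [hqdef, le_div_iff₀ hp1]; linarith
  have hq1' : 1 < q := by
    rw [hqdef, lt_div_iff₀ hp1]; linarith
  set α : ℝ := (N:ℝ) - ((N:ℝ) - p) / p with hαdef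
  set γ : ℝ := (N:ℝ) * (p - 1) / p with hγdef
  have hαγ : α = γ + 1 := by rw [hαdef, hγdef]; field_simp; ring
  have hγq : γ * q = (N:ℝ) := by rw [hγdef, hqdef]; field_simp
  have hα0 : 0 < α := by
    have h1 : ((N:ℝ) - p)/p < (N:ℝ) := by
      rw [div_lt_iff₀ hp0]; nlinarith
    rw [hαdef]; linarith
  have hωN : 0 < ωN := by
    have h1 := Metric.measure_ball_pos volume (0 : EuclideanSpace ℝ (Fin N)) one_pos
    have h2 : volume (Metric.ball (0 : EuclideanSpace ℝ (Fin N)) 1) < ⊤ :=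
      measure_ball_lt_top
    rw [hωNdef]
    exact ENNReal.toReal_pos h1.ne' h2.ne
  set a : ℝ := (p - 1) / ((N:ℝ) - p) with hadef
  have ha0 : 0 < a := div_pos hp1 hNp
  have hNωN : (0:ℝ) < (N:ℝ) * ωN := mul_pos hNpos hωN
  have hC0 : 0 < C0 := mul_pos ha0 (Real.rpow_pos_of_pos hNωN _)
  have hC1 : 0 < C1 := mul_pos (Real.rpow_pos_of_pos hNpos _)
    (Real.rpow_pos_of_pos (div_pos hNp hp1) _)
  set K : ℝ := C0 ^ (p - 1) * C1 ^ (p ^ 2 / ((N:ℝ) - p)) with hKdef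
  have hK0 : 0 < K := mul_pos (Real.rpow_pos_of_pos hC0 _) (Real.rpow_pos_of_pos hC1 _)
  have hfeq : ∀ (ε : ℝ) (x : EuclideanSpace ℝ (Fin N)),
      fε ε x = K * ε ^ p * (ε ^ p + ‖x - x0‖ ^ q) ^ (-α) := fun _ _ => rfl
  -- the normalization `ωN * K = 1`
  have hωK : ωN * K = 1 := by
    have e1 : C0 ^ (p - 1) = a ^ (p - 1) * ((N:ℝ) * ωN)⁻¹ := by
      rw [show C0 = a * ((N:ℝ)*ωN) ^ (-(1:ℝ)/(p-1)) from rfl,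
        Real.mul_rpow ha0.le (Real.rpow_pos_of_pos hNωN _).le,
        ← Real.rpow_mul hNωN.le]
      congr 1
      rw [show (-(1:ℝ)/(p-1)) * (p-1) = -1 by field_simp, Real.rpow_neg_one]
    have e2 : C1 ^ (p ^ 2 / ((N:ℝ) - p)) = (N:ℝ) * a⁻¹ ^ (p - 1) := by
      rw [show C1 = (N:ℝ) ^ (((N:ℝ)-p)/p^2) *
          (((N:ℝ)-p)/(p-1)) ^ ((p-1)*((N:ℝ)-p)/p^2) from rfl,
        Real.mul_rpow (Real.rpow_pos_of_pos hNpos _).le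
          (Real.rpow_pos_of_pos (div_pos hNp hp1) _).le,
        ← Real.rpow_mul hNpos.le, ← Real.rpow_mul (div_pos hNp hp1).le]
      rw [show (((N:ℝ)-p)/p^2) * (p^2/((N:ℝ)-p)) = 1 by
          field_simp,
        show ((p-1)*((N:ℝ)-p)/p^2) * (p^2/((N:ℝ)-p)) = p - 1 by
          field_simp,
        Real.rpow_one]
      congr 2
      rw [hadef]
      field_simp
    have e3 : a ^ (p-1) * a⁻¹ ^ (p-1) = 1 := by
      rw [← Real.mul_rpow ha0.le (inv_nonneg.mpr ha0.le), mul_inv_cancel₀ ha0.ne',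
        Real.one_rpow]
    have e4 : ωN * (a ^ (p-1) * ((N:ℝ)*ωN)⁻¹ * ((N:ℝ) * a⁻¹ ^ (p-1))) =
        (a ^ (p-1) * a⁻¹ ^ (p-1)) * (((N:ℝ)*ωN)⁻¹ * ((N:ℝ)*ωN)) := by ring
    rw [hKdef, e1, e2, e4, e3, inv_mul_cancel₀ hNωN.ne', one_mul]
  -- Part 1 : nonnegativity
  have part1 : ∀ ε : ℝ, 0 < ε → ∀ x : EuclideanSpace ℝ (Fin N), 0 ≤ fε ε x := by
    intro ε hε x
    rw [hfeq]
    have h1 : (0:ℝ) ≤ ε ^ p + ‖x - x0‖ ^ q :=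
      add_nonneg (Real.rpow_nonneg hε.le p) (Real.rpow_nonneg (norm_nonneg _) q)
    exact mul_nonneg (mul_nonneg hK0.le (Real.rpow_nonneg hε.le p))
      (Real.rpow_nonneg h1 _)
  -- the exact value of the integral over a ball
  haveI : Nonempty (Fin N) := ⟨⟨0, by omega⟩⟩
  haveI : Nontrivial (EuclideanSpace ℝ (Fin N)) := by
    refine nontrivial_of_ne (EuclideanSpace.single ⟨0, by omega⟩ (1:ℝ)) 0 fun h => ?_
    have := congrArg (fun v : EuclideanSpace ℝ (Fin N) => v ⟨0, by omega⟩) h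
    simp [EuclideanSpace.single_apply] at this
  have key : ∀ r : ℝ, 0 < r → ∀ ε : ℝ, 0 < ε →
      ∫ x in Metric.ball x0 r, fε ε x = r ^ N * (ε ^ p + r ^ q) ^ (-γ) := by
    intro r hr ε hε
    have hεp : 0 < ε ^ p := Real.rpow_pos_of_pos hε p
    set c : ℝ := K / N with hcdef
    have hcN : c * (N:ℝ) = K := div_mul_cancel₀ K hNpos.ne'
    set H : ℝ → ℝ :=
      fun y => y ^ (N-1) * (K * ε ^ p * (ε ^ p + y ^ q) ^ (-α)) with hHdef
    set g : ℝ → ℝ :=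
      fun t => Set.indicator (Set.Iio r) (fun t => K * ε ^ p * (ε ^ p + t ^ q) ^ (-α)) t
      with hgdef
    have s1 : ∫ x in Metric.ball x0 r, fε ε x = ∫ x : EuclideanSpace ℝ (Fin N), g ‖x‖ := by
      rw [← integral_indicator measurableSet_ball]
      have e : (fun x => Set.indicator (Metric.ball x0 r) (fε ε) x) =
          fun x => g ‖x - x0‖ := by
        funext x
        simp only [hgdef]
        by_cases hxx : x ∈ Metric.ball x0 r
        · rw [Set.indicator_of_mem hxx, Set.indicator_of_mem
            (by rwa [Set.mem_Iio, ← dist_eq_norm, ← Metric.mem_ball]), hfeq]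
        · rw [Set.indicator_of_notMem hxx, Set.indicator_of_notMem
            (by rwa [Set.mem_Iio, ← dist_eq_norm, ← Metric.mem_ball])]
      rw [e]
      exact integral_sub_right_eq_self (fun x => g ‖x‖) x0
    have s2 : ∫ x : EuclideanSpace ℝ (Fin N), g ‖x‖ =
        (N:ℝ) * ωN * ∫ y in Set.Ioi (0:ℝ), y ^ (N-1) • g y := by
      rw [integral_fun_norm_addHaar volume g, finrank_euclideanSpace_fin,
        nsmul_eq_mul, smul_eq_mul, hωNdef]
      rw [measureReal_def]
      ring
    have s3 : ∫ y in Set.Ioi (0:ℝ), y ^ (N-1) • g y = ∫ y in (0:ℝ)..r, H y := by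
      have e : ∀ y : ℝ, y ^ (N-1) • g y = Set.indicator (Set.Iio r) H y := by
        intro y
        rw [hgdef, hHdef]
        by_cases h : y ∈ Set.Iio r
        · simp [Set.indicator_of_mem h, smul_eq_mul]
        · simp [Set.indicator_of_notMem h]
      simp only [e]
      rw [setIntegral_indicator measurableSet_Iio, Set.Ioi_inter_Iio,
        ← integral_Ioc_eq_integral_Ioo, ← intervalIntegral.integral_of_le hr.le]
    set F : ℝ → ℝ := fun y => c * (y ^ N * (ε ^ p + y ^ q) ^ (-γ)) with hFdef
    have hderiv : ∀ y ∈ Set.uIcc (0:ℝ) r, HasDerivAt F (H y) y := by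
      intro y hy
      rw [Set.uIcc_of_le hr.le] at hy
      have hy0 : 0 ≤ y := hy.1
      have hA : 0 < ε ^ p + y ^ q := by
        have := Real.rpow_nonneg hy0 q; linarith
      have d1 : HasDerivAt (fun y : ℝ => y ^ N) ((N:ℝ) * y ^ (N-1)) y := hasDerivAt_pow N y
      have d2 : HasDerivAt (fun y : ℝ => ε ^ p + y ^ q) (q * y ^ (q-1)) y :=
        (Real.hasDerivAt_rpow_const (Or.inr hq1)).const_add (ε ^ p)
      have d3 : HasDerivAt (fun y : ℝ => (ε ^ p + y ^ q) ^ (-γ))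
          (-γ * (ε ^ p + y ^ q) ^ (-γ - 1) * (q * y ^ (q-1))) y := by
        have d4 : HasDerivAt (fun A : ℝ => A ^ (-γ))
            (-γ * (ε ^ p + y ^ q) ^ (-γ - 1)) (ε ^ p + y ^ q) :=
          Real.hasDerivAt_rpow_const (Or.inl hA.ne')
        exact d4.comp y d2
      have d5 := (d1.mul d3).const_mul c
      refine HasDerivAt.congr_deriv d5 (Eq.symm ?_)
      rw [hHdef]
      rcases eq_or_lt_of_le hy0 with h0 | h0
      · rw [← h0]
        simp [Real.zero_rpow (by positivity : q ≠ 0), zero_pow (by omega : N - 1 ≠ 0),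
          zero_pow (by omega : N ≠ 0), Real.zero_rpow (ne_of_gt (by linarith [hq1'] : (0:ℝ) < q - 1))]
      · have hmγ : -γ - 1 = -α := by rw [hαγ]; ring
        have hA1 : (ε ^ p + y ^ q) ^ (-γ) = (ε ^ p + y ^ q) * (ε ^ p + y ^ q) ^ (-α) := by
          calc (ε ^ p + y ^ q) ^ (-γ) = (ε ^ p + y ^ q) ^ ((1:ℝ) + -α) := by
                rw [show (1:ℝ) + -α = -γ by rw [hαγ]; ring]
            _ = (ε ^ p + y ^ q) ^ (1:ℝ) * (ε ^ p + y ^ q) ^ (-α) := Real.rpow_add hA 1 (-α)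
            _ = (ε ^ p + y ^ q) * (ε ^ p + y ^ q) ^ (-α) := by rw [Real.rpow_one]
        have hyq : y ^ q = y * y ^ (q - 1) := by
          calc y ^ q = y ^ ((1:ℝ) + (q-1)) := by rw [show (1:ℝ) + (q-1) = q by ring]
            _ = y ^ (1:ℝ) * y ^ (q-1) := Real.rpow_add h0 1 (q-1)
            _ = y * y ^ (q-1) := by rw [Real.rpow_one]
        have hyN : y ^ N = y ^ (N-1) * y := by
          conv_lhs => rw [show N = (N-1) + 1 by omega]
          rw [pow_succ]
        rw [hmγ, hA1, hyN]
        linear_combination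
          (-(y^(N-1) * (ε^p + y^q) ^ (-α) * ε^p)) * hcN -
          (c * (N:ℝ) * y^(N-1) * (ε^p + y^q) ^ (-α)) * hyq +
          (c * y^(N-1) * (ε^p + y^q) ^ (-α) * y * y^(q-1)) * hγq
    have hH_int : IntervalIntegrable H volume 0 r := by
      apply ContinuousOn.intervalIntegrable
      intro y hy
      rw [Set.uIcc_of_le hr.le] at hy
      have hy0 : 0 ≤ y := hy.1
      have hA : 0 < ε ^ p + y ^ q := by
        have := Real.rpow_nonneg hy0 q; linarith
      apply ContinuousAt.continuousWithinAt
      rw [hHdef]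
      have hinner : ContinuousAt (fun y : ℝ => ε ^ p + y ^ q) y :=
        continuousAt_const.add (Real.continuousAt_rpow_const y q (Or.inr hq0.le))
      exact (continuous_pow (N-1)).continuousAt.mul
        (continuousAt_const.mul (hinner.rpow_const (Or.inl hA.ne')))
    have s4 : ∫ y in (0:ℝ)..r, H y = F r - F 0 :=
      intervalIntegral.integral_eq_sub_of_hasDerivAt hderiv hH_int
    have hF0 : F 0 = 0 := by
      rw [hFdef]; simp [zero_pow (by omega : N ≠ 0)]
    rw [s1, s2, s3, s4, hF0, sub_zero, hFdef]
    have hc1 : (N:ℝ) * ωN * c = 1 := by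
      rw [hcdef]
      field_simp
      linear_combination hωK
    calc (N:ℝ) * ωN * (c * (r ^ N * (ε ^ p + r ^ q) ^ (-γ)))
        = ((N:ℝ) * ωN * c) * (r ^ N * (ε ^ p + r ^ q) ^ (-γ)) := by ring
      _ = r ^ N * (ε ^ p + r ^ q) ^ (-γ) := by rw [hc1, one_mul]
  -- Part 2 : the integrals tend to 1
  have part2 : ∀ r : ℝ, 0 < r →
      Tendsto (fun ε => ∫ x in Metric.ball x0 r, fε ε x) (𝓝[>] (0:ℝ)) (𝓝 1) := by
    intro r hr
    have hrq : 0 < r ^ q := Real.rpow_pos_of_pos hr q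
    have h0 : Tendsto (fun ε : ℝ => ε ^ p + r ^ q) (𝓝[>] (0:ℝ)) (𝓝 (r ^ q)) := by
      have h := ((Real.continuousAt_rpow_const 0 p (Or.inr hp0.le)).tendsto).mono_left
        (nhdsWithin_le_nhds : 𝓝[>] (0:ℝ) ≤ 𝓝 0)
      rw [Real.zero_rpow hp0.ne'] at h
      have := h.add (tendsto_const_nhds : Tendsto (fun _ : ℝ => r ^ q) (𝓝[>] (0:ℝ)) _)
      simpa using this
    have h2 : Tendsto (fun A : ℝ => A ^ (-γ)) (𝓝 (r ^ q)) (𝓝 ((r ^ q) ^ (-γ))) :=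
      (Real.continuousAt_rpow_const _ _ (Or.inl hrq.ne')).tendsto
    have h3 := (h2.comp h0).const_mul (r ^ N : ℝ)
    have h4 : (r:ℝ) ^ N * (r ^ q) ^ (-γ) = 1 := by
      rw [← Real.rpow_natCast r N, ← Real.rpow_mul hr.le, ← Real.rpow_add hr,
        show (N:ℝ) + q * (-γ) = 0 by rw [mul_neg, mul_comm q γ, hγq]; ring,
        Real.rpow_zero]
    rw [h4] at h3
    have h5 : Tendsto (fun ε : ℝ => r ^ N * (ε ^ p + r ^ q) ^ (-γ)) (𝓝[>] (0:ℝ)) (𝓝 1) := by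
      refine h3.congr fun ε => ?_
      rfl
    refine h5.congr' ?_
    filter_upwards [self_mem_nhdsWithin] with ε hε
    exact (key r hr ε hε).symm
  -- Part 3 : uniform convergence to 0 away from x0
  have part3 : ∀ r : ℝ, 0 < r →
      TendstoUniformlyOn (fun ε x => fε ε x) (fun _ => (0:ℝ)) (𝓝[>] (0:ℝ))
        {x : EuclideanSpace ℝ (Fin N) | r ≤ ‖x - x0‖} := by
    intro r hr
    rw [Metric.tendstoUniformlyOn_iff]
    intro δ hδ
    have hrq : 0 < r ^ q := Real.rpow_pos_of_pos hr q
    have hc : Tendsto (fun ε : ℝ => K * (r ^ q) ^ (-α) * ε ^ p) (𝓝[>] (0:ℝ)) (𝓝 0) := by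
      have h := ((Real.continuousAt_rpow_const 0 p (Or.inr hp0.le)).tendsto).mono_left
        (nhdsWithin_le_nhds : 𝓝[>] (0:ℝ) ≤ 𝓝 0)
      rw [Real.zero_rpow hp0.ne'] at h
      have := h.const_mul (K * (r ^ q) ^ (-α))
      simpa using this
    filter_upwards [hc.eventually (gt_mem_nhds hδ), self_mem_nhdsWithin] with ε h1 h2
    intro x hx
    have hε : (0:ℝ) < ε := h2
    have hb : fε ε x ≤ K * (r ^ q) ^ (-α) * ε ^ p := by
      rw [hfeq]
      have hA : r ^ q ≤ ε ^ p + ‖x - x0‖ ^ q := by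
        have h5 : r ^ q ≤ ‖x - x0‖ ^ q := Real.rpow_le_rpow hr.le hx hq0.le
        have h6 := (Real.rpow_pos_of_pos hε p).le
        linarith
      have h7 : (ε ^ p + ‖x - x0‖ ^ q) ^ (-α) ≤ (r ^ q) ^ (-α) :=
        Real.rpow_le_rpow_of_nonpos hrq hA (neg_nonpos.mpr hα0.le)
      calc K * ε ^ p * (ε ^ p + ‖x - x0‖ ^ q) ^ (-α)
          ≤ K * ε ^ p * (r ^ q) ^ (-α) := by
            apply mul_le_mul_of_nonneg_left h7
            exact mul_nonneg hK0.le (Real.rpow_pos_of_pos hε p).le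
        _ = K * (r ^ q) ^ (-α) * ε ^ p := by ring
    have h0 : 0 ≤ fε ε x := part1 ε hε x
    rw [Real.dist_eq]
    have habs : |0 - fε ε x| = fε ε x := by
      rw [zero_sub, abs_neg, abs_of_nonneg h0]
    rw [habs]
    exact lt_of_le_of_lt hb h1
  exact ⟨part1, part2, part3⟩

end
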